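/- There exist 2×2 Hermitian positive definite matrices A₁, A₂, A₃ with all eigenvalues in (0,1] such that ρ(A₁²A₂²A₃²) < ρ(A₁A₂A₃)², where ρ is the spectral radius. There also exist such matrices with ρ(A₁²A₂²A₃²) > ρ(A₁A₂A₃). -/

import Mathlib

open Matrix
open scoped ComplexOrder
open scoped ENNReal NNReal

section Helpers

open Complex

private lemma quad_pos' (u v w n0 n1 r : ℝ) (hu : 0 < u) (hd : v * v < u * w)
    (h0 : 0 ≤ n0) (h1 : 0 ≤ n1) (hr : r * r ≤ n0 * n1) (hx : 0 < n0 + n1) :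
    0 < u * n0 + 2 * v * r + w * n1 := by
  rcases eq_or_lt_of_le h1 with h1' | h1'
  · obtain rfl : n1 = 0 := h1'.symm
    obtain rfl : r = 0 := by nlinarith
    have hn0 : 0 < n0 := by nlinarith
    nlinarith [mul_pos hu hn0]
  · nlinarith [mul_pos hu h1', sq_nonneg (u * r + v * n1),
      mul_le_mul_of_nonneg_left hr (mul_nonneg hu.le hu.le),
      mul_pos (sub_pos.mpr hd) (mul_pos h1' h1')]

private lemma quad_nonneg' (u v w n0 n1 r : ℝ) (hu : 0 ≤ u) (hw : 0 ≤ w) (hd : v * v ≤ u * w)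
    (h0 : 0 ≤ n0) (h1 : 0 ≤ n1) (hr : r * r ≤ n0 * n1) :
    0 ≤ u * n0 + 2 * v * r + w * n1 := by
  rcases eq_or_lt_of_le hu with hu' | hu'
  · obtain rfl : u = 0 := hu'.symm
    obtain rfl : v = 0 := by nlinarith
    nlinarith [mul_nonneg hw h1]
  · rcases eq_or_lt_of_le h1 with h1' | h1'
    · obtain rfl : n1 = 0 := h1'.symm
      obtain rfl : r = 0 := by nlinarith
      nlinarith [mul_nonneg hu h0, mul_nonneg hw h1]
    · nlinarith [mul_pos hu' h1', sq_nonneg (u * r + v * n1),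
        mul_le_mul_of_nonneg_left hr (mul_nonneg hu hu),
        mul_nonneg (mul_nonneg (sub_nonneg.mpr hd) h1) h1]

private lemma dot_eq' (a p b : ℝ) (x : Fin 2 → ℂ) :
    star x ⬝ᵥ (!![(a : ℂ), (p : ℂ); (p : ℂ), (b : ℂ)]) *ᵥ x =
      ((a * normSq (x 0) + 2 * p * ((starRingEnd ℂ) (x 0) * x 1).re + b * normSq (x 1) : ℝ) : ℂ) := by
  have e0 : (starRingEnd ℂ) (x 0) * x 0 = ((normSq (x 0) : ℝ) : ℂ) := normSq_eq_conj_mul_self.symm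
  have e1 : (starRingEnd ℂ) (x 1) * x 1 = ((normSq (x 1) : ℝ) : ℂ) := normSq_eq_conj_mul_self.symm
  have e2 : (starRingEnd ℂ) (x 0) * x 1 + (starRingEnd ℂ) (x 1) * x 0 =
      ((2 * ((starRingEnd ℂ) (x 0) * x 1).re : ℝ) : ℂ) := by
    have hz : (starRingEnd ℂ) (x 1) * x 0 = (starRingEnd ℂ) ((starRingEnd ℂ) (x 0) * x 1) := by
      rw [map_mul (starRingEnd ℂ), RingHomCompTriple.comp_apply]
      ring_nf
      simp [mul_comm]
    rw [hz]
    exact Complex.add_conj _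
  simp [dotProduct, Matrix.mulVec, Fin.sum_univ_two, Complex.star_def]
  simp only [Complex.mul_re, Complex.conj_re, Complex.conj_im] at e2
  push_cast at e2 ⊢
  linear_combination (a : ℂ) * e0 + (b : ℂ) * e1 + (p : ℂ) * e2

private lemma herm2 (a p b : ℝ) : (!![(a : ℂ), (p : ℂ); (p : ℂ), (b : ℂ)]).IsHermitian := by
  unfold Matrix.IsHermitian
  ext i j
  fin_cases i <;> fin_cases j <;>
    simp [Matrix.conjTranspose_apply, Complex.conj_ofReal]

private lemma normSq_facts' (x : Fin 2 → ℂ) (hx : x ≠ 0) :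
    0 < normSq (x 0) + normSq (x 1) := by
  rcases Function.ne_iff.mp hx with ⟨i, hi⟩
  have h0 := normSq_nonneg (x 0)
  have h1 := normSq_nonneg (x 1)
  fin_cases i <;> simp only [Fin.isValue, Pi.zero_apply] at hi <;>
    [have := normSq_pos.mpr hi; have := normSq_pos.mpr hi] <;>
    · simp only [Fin.zero_eta, Fin.mk_one] at this
      linarith

private lemma re_sq' (x : Fin 2 → ℂ) :
    ((starRingEnd ℂ) (x 0) * x 1).re * ((starRingEnd ℂ) (x 0) * x 1).re ≤
      normSq (x 0) * normSq (x 1) := by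
  have h := Complex.re_sq_le_normSq ((starRingEnd ℂ) (x 0) * x 1)
  rwa [Complex.normSq_mul, Complex.normSq_conj] at h

private lemma posDef2 (a p b : ℝ) (ha : 0 < a) (hd : p * p < a * b) :
    (!![(a : ℂ), (p : ℂ); (p : ℂ), (b : ℂ)]).PosDef := by
  refine Matrix.posDef_iff_dotProduct_mulVec.mpr ⟨herm2 a p b, fun x hx => ?_⟩
  rw [dot_eq', Complex.zero_lt_real]
  exact quad_pos' a p b _ _ _ ha hd (normSq_nonneg _) (normSq_nonneg _) (re_sq' x)
    (normSq_facts' x hx)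

private lemma posSemidef2 (u v w : ℝ) (hu : 0 ≤ u) (hw : 0 ≤ w) (hd : v * v ≤ u * w) :
    (!![(u : ℂ), (v : ℂ); (v : ℂ), (w : ℂ)]).PosSemidef := by
  refine Matrix.posSemidef_iff_dotProduct_mulVec.mpr ⟨herm2 u v w, fun x => ?_⟩
  rw [dot_eq', Complex.zero_le_real]
  exact quad_nonneg' u v w _ _ _ hu hw hd (normSq_nonneg _) (normSq_nonneg _) (re_sq' x)

private lemma one_sub2 (a p b : ℝ) :
    (1 : Matrix (Fin 2) (Fin 2) ℂ) - !![(a : ℂ), (p : ℂ); (p : ℂ), (b : ℂ)] =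
      !![((1 - a : ℝ) : ℂ), ((-p : ℝ) : ℂ); ((-p : ℝ) : ℂ), ((1 - b : ℝ) : ℂ)] := by
  ext i j
  fin_cases i <;> fin_cases j <;> simp [Matrix.one_apply] <;> push_cast <;> ring

private lemma one_sub_psd (a p b : ℝ) (ha : a ≤ 1) (hb : b ≤ 1)
    (hd : p * p ≤ (1 - a) * (1 - b)) :
    ((1 : Matrix (Fin 2) (Fin 2) ℂ) - !![(a : ℂ), (p : ℂ); (p : ℂ), (b : ℂ)]).PosSemidef := by
  rw [one_sub2]
  exact posSemidef2 (1 - a) (-p) (1 - b) (by linarith) (by linarith) (by nlinarith)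

private lemma mem_spec' (M : Matrix (Fin 2) (Fin 2) ℂ) (z : ℂ) :
    z ∈ spectrum ℂ M ↔ (z • (1 : Matrix (Fin 2) (Fin 2) ℂ) - M).det = 0 := by
  rw [spectrum.mem_iff, Matrix.isUnit_iff_isUnit_det, isUnit_iff_ne_zero, not_ne_iff,
    Algebra.algebraMap_eq_smul_one]

private lemma spec_pair' (M : Matrix (Fin 2) (Fin 2) ℂ) (μ ν : ℂ)
    (h : ∀ z : ℂ, (z • (1 : Matrix (Fin 2) (Fin 2) ℂ) - M).det = (z - μ) * (z - ν)) :
    spectrum ℂ M = {μ, ν} := by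
  ext z
  rw [mem_spec', h z, mul_eq_zero, sub_eq_zero, sub_eq_zero]
  simp [Set.mem_insert_iff]

private lemma sr_pair' (M : Matrix (Fin 2) (Fin 2) ℂ) (μ ν : ℂ)
    (h : spectrum ℂ M = {μ, ν}) :
    spectralRadius ℂ M = (‖μ‖₊ : ℝ≥0∞) ⊔ (‖ν‖₊ : ℝ≥0∞) := by
  rw [spectralRadius, h]
  rw [iSup_insert, iSup_singleton]

private lemma le_sr' (M : Matrix (Fin 2) (Fin 2) ℂ) (μ : ℂ) (h : μ ∈ spectrum ℂ M) :
    (‖μ‖₊ : ℝ≥0∞) ≤ spectralRadius ℂ M :=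
  le_iSup₂ (f := fun k (_ : k ∈ spectrum ℂ M) => (‖k‖₊ : ℝ≥0∞)) μ h

private lemma coe_lt_coe_norm {z w : ℂ} (h : ‖z‖ < ‖w‖) :
    (‖z‖₊ : ℝ≥0∞) < (‖w‖₊ : ℝ≥0∞) := by
  rw [ENNReal.coe_lt_coe, ← NNReal.coe_lt_coe, coe_nnnorm, coe_nnnorm]
  exact h

private lemma norm_ofReal (q : ℝ) (hq : 0 ≤ q) : ‖((q : ℝ) : ℂ)‖ = q := by
  rw [Complex.norm_real, Real.norm_eq_abs, _root_.abs_of_nonneg hq]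

end Helpers

example : True := trivial


set_option maxHeartbeats 1000000 in
/-- There are 2×2 Hermitian positive definite matrices `A₁, A₂, A₃` with eigenvalues in
`(0,1]` such that `ρ(A₁²A₂²A₃²) < ρ(A₁A₂A₃)²`, and other such matrices with
`ρ(A₁²A₂²A₃²) > ρ(A₁A₂A₃)`. -/
theorem stmt_15 :
    (∃ A₁ A₂ A₃ : Matrix (Fin 2) (Fin 2) ℂ,
      A₁.PosDef ∧ A₂.PosDef ∧ A₃.PosDef ∧
      (1 - A₁).PosSemidef ∧ (1 - A₂).PosSemidef ∧ (1 - A₃).PosSemidef ∧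
      spectralRadius ℂ (A₁ ^ 2 * A₂ ^ 2 * A₃ ^ 2) <
        (spectralRadius ℂ (A₁ * A₂ * A₃)) ^ 2) ∧
    (∃ A₁ A₂ A₃ : Matrix (Fin 2) (Fin 2) ℂ,
      A₁.PosDef ∧ A₂.PosDef ∧ A₃.PosDef ∧
      (1 - A₁).PosSemidef ∧ (1 - A₂).PosSemidef ∧ (1 - A₃).PosSemidef ∧
      spectralRadius ℂ (A₁ * A₂ * A₃) <
        spectralRadius ℂ (A₁ ^ 2 * A₂ ^ 2 * A₃ ^ 2)) := by
  constructor
  · -- Part 1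
    refine ⟨!![((1/4 : ℝ) : ℂ), ((3/8 : ℝ) : ℂ); ((3/8 : ℝ) : ℂ), ((5/8 : ℝ) : ℂ)],
      !![((5/8 : ℝ) : ℂ), ((0 : ℝ) : ℂ); ((0 : ℝ) : ℂ), ((3/8 : ℝ) : ℂ)],
      !![((1/8 : ℝ) : ℂ), ((-1/8 : ℝ) : ℂ); ((-1/8 : ℝ) : ℂ), ((31/102 : ℝ) : ℂ)],
      posDef2 _ _ _ (by norm_num) (by norm_num),
      posDef2 _ _ _ (by norm_num) (by norm_num),
      posDef2 _ _ _ (by norm_num) (by norm_num),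
      one_sub_psd _ _ _ (by norm_num) (by norm_num) (by norm_num),
      one_sub_psd _ _ _ (by norm_num) (by norm_num) (by norm_num),
      one_sub_psd _ _ _ (by norm_num) (by norm_num) (by norm_num), ?_⟩
    have hdetP : ∀ z : ℂ, (z • (1 : Matrix (Fin 2) (Fin 2) ℂ) -
        !![((1/4 : ℝ) : ℂ), ((3/8 : ℝ) : ℂ); ((3/8 : ℝ) : ℂ), ((5/8 : ℝ) : ℂ)] *
        !![((5/8 : ℝ) : ℂ), ((0 : ℝ) : ℂ); ((0 : ℝ) : ℂ), ((3/8 : ℝ) : ℂ)] *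
        !![((1/8 : ℝ) : ℂ), ((-1/8 : ℝ) : ℂ); ((-1/8 : ℝ) : ℂ), ((31/102 : ℝ) : ℂ)]).det =
        (z - ((1/512 : ℝ) : ℂ)) * (z - ((365/8704 : ℝ) : ℂ)) := by
      intro z
      simp [Matrix.det_fin_two, Matrix.mul_apply, Fin.sum_univ_two, Matrix.smul_apply,
        Matrix.sub_apply, Matrix.one_apply]
      push_cast
      ring
    have hdetQ : ∀ z : ℂ, (z • (1 : Matrix (Fin 2) (Fin 2) ℂ) -
        !![((1/4 : ℝ) : ℂ), ((3/8 : ℝ) : ℂ); ((3/8 : ℝ) : ℂ), ((5/8 : ℝ) : ℂ)] ^ 2 *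
        !![((5/8 : ℝ) : ℂ), ((0 : ℝ) : ℂ); ((0 : ℝ) : ℂ), ((3/8 : ℝ) : ℂ)] ^ 2 *
        !![((1/8 : ℝ) : ℂ), ((-1/8 : ℝ) : ℂ); ((-1/8 : ℝ) : ℂ), ((31/102 : ℝ) : ℂ)] ^ 2).det =
        (z - ((25/4456448 : ℝ) : ℂ)) * (z - ((5329/4456448 : ℝ) : ℂ)) := by
      intro z
      simp [pow_two, Matrix.det_fin_two, Matrix.mul_apply, Fin.sum_univ_two, Matrix.smul_apply,
        Matrix.sub_apply, Matrix.one_apply]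
      push_cast
      ring
    have hsrQ := sr_pair' _ _ _ (spec_pair' _ _ _ hdetQ)
    have hy : ((365/8704 : ℝ) : ℂ) ∈ spectrum ℂ
        (!![((1/4 : ℝ) : ℂ), ((3/8 : ℝ) : ℂ); ((3/8 : ℝ) : ℂ), ((5/8 : ℝ) : ℂ)] *
        !![((5/8 : ℝ) : ℂ), ((0 : ℝ) : ℂ); ((0 : ℝ) : ℂ), ((3/8 : ℝ) : ℂ)] *
        !![((1/8 : ℝ) : ℂ), ((-1/8 : ℝ) : ℂ); ((-1/8 : ℝ) : ℂ), ((31/102 : ℝ) : ℂ)]) := by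
      rw [spec_pair' _ _ _ hdetP]
      simp
    have hPy := le_sr' _ _ hy
    rw [hsrQ]
    have key : (‖((25/4456448 : ℝ) : ℂ)‖₊ : ℝ≥0∞) ⊔ (‖((5329/4456448 : ℝ) : ℂ)‖₊ : ℝ≥0∞) <
        (‖((365/8704 : ℝ) : ℂ)‖₊ : ℝ≥0∞) ^ 2 := by
      rw [sup_lt_iff]
      constructor <;>
      · rw [← ENNReal.coe_pow, ENNReal.coe_lt_coe, ← NNReal.coe_lt_coe, NNReal.coe_pow,
          coe_nnnorm, coe_nnnorm, norm_ofReal _ (by norm_num), norm_ofReal _ (by norm_num)]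
        norm_num
    exact key.trans_le (pow_le_pow_left₀ zero_le' hPy 2)
  · -- Part 2
    refine ⟨!![((1 : ℝ) : ℂ), ((0 : ℝ) : ℂ); ((0 : ℝ) : ℂ), ((3/16 : ℝ) : ℂ)],
      !![((1/16 : ℝ) : ℂ), ((7/32 : ℝ) : ℂ); ((7/32 : ℝ) : ℂ), ((25/32 : ℝ) : ℂ)],
      !![((9/32 : ℝ) : ℂ), ((-13/32 : ℝ) : ℂ); ((-13/32 : ℝ) : ℂ), ((19/32 : ℝ) : ℂ)],
      posDef2 _ _ _ (by norm_num) (by norm_num),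
      posDef2 _ _ _ (by norm_num) (by norm_num),
      posDef2 _ _ _ (by norm_num) (by norm_num),
      one_sub_psd _ _ _ (by norm_num) (by norm_num) (by norm_num),
      one_sub_psd _ _ _ (by norm_num) (by norm_num) (by norm_num),
      one_sub_psd _ _ _ (by norm_num) (by norm_num) (by norm_num), ?_⟩
    set s : ℝ := Real.sqrt (1/8388608) with hs_def
    have hs : s ^ 2 = 1/8388608 := Real.sq_sqrt (by norm_num)
    have hs_nonneg : 0 ≤ s := Real.sqrt_nonneg _
    set μ₁ : ℂ := ((-1/2048 : ℝ) : ℂ) + (s : ℂ) * Complex.I with hμ₁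
    set μ₂ : ℂ := ((-1/2048 : ℝ) : ℂ) - (s : ℂ) * Complex.I with hμ₂
    have hsC : ((s : ℂ)) ^ 2 = (1/8388608 : ℂ) := by
      rw [← Complex.ofReal_pow, hs]
      norm_num
    have hdetP : ∀ z : ℂ, (z • (1 : Matrix (Fin 2) (Fin 2) ℂ) -
        !![((1 : ℝ) : ℂ), ((0 : ℝ) : ℂ); ((0 : ℝ) : ℂ), ((3/16 : ℝ) : ℂ)] *
        !![((1/16 : ℝ) : ℂ), ((7/32 : ℝ) : ℂ); ((7/32 : ℝ) : ℂ), ((25/32 : ℝ) : ℂ)] *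
        !![((9/32 : ℝ) : ℂ), ((-13/32 : ℝ) : ℂ); ((-13/32 : ℝ) : ℂ), ((19/32 : ℝ) : ℂ)]).det =
        (z - μ₁) * (z - μ₂) := by
      intro z
      rw [hμ₁, hμ₂]
      simp [Matrix.det_fin_two, Matrix.mul_apply, Fin.sum_univ_two, Matrix.smul_apply,
        Matrix.sub_apply, Matrix.one_apply]
      push_cast
      linear_combination ((s : ℂ)) ^ 2 * Complex.I_sq - hsC
    -- the eigenvalue of Q
    set D : ℝ := 2111194469449/1125899906842624 with hD_def
    set t : ℝ := Real.sqrt D with ht_def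
    have ht : t ^ 2 = D := Real.sq_sqrt (by norm_num)
    have ht_nonneg : 0 ≤ t := Real.sqrt_nonneg _
    set ν : ℝ := (-1452995/33554432 - t)/2 with hν_def
    have hνQ : ((ν : ℝ) : ℂ) ∈ spectrum ℂ
        (!![((1 : ℝ) : ℂ), ((0 : ℝ) : ℂ); ((0 : ℝ) : ℂ), ((3/16 : ℝ) : ℂ)] ^ 2 *
        !![((1/16 : ℝ) : ℂ), ((7/32 : ℝ) : ℂ); ((7/32 : ℝ) : ℂ), ((25/32 : ℝ) : ℂ)] ^ 2 *
        !![((9/32 : ℝ) : ℂ), ((-13/32 : ℝ) : ℂ); ((-13/32 : ℝ) : ℂ), ((19/32 : ℝ) : ℂ)] ^ 2) := by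
      rw [mem_spec']
      have hreal : ν ^ 2 + (1452995/33554432) * ν + 9/70368744177664 = 0 := by
        rw [hν_def]
        linear_combination (1/4 : ℝ) * ht
      simp [pow_two, Matrix.det_fin_two, Matrix.mul_apply, Fin.sum_univ_two, Matrix.smul_apply,
        Matrix.sub_apply, Matrix.one_apply]
      push_cast
      have hrealC := congrArg (fun x : ℝ => (x : ℂ)) hreal
      push_cast at hrealC
      linear_combination hrealC
    have hspecP := spec_pair' _ _ _ hdetP
    have hsrP := sr_pair' _ _ _ hspecP
    have hQν := le_sr' _ _ hνQ
    rw [hsrP]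
    -- norms
    have hν_le : ν ≤ -1452995/67108864 := by
      rw [hν_def]; linarith
    have hν_sq : (3/8388608 : ℝ) < ν ^ 2 := by nlinarith
    have hnormν : (3/8388608 : ℝ) < ‖((ν : ℝ) : ℂ)‖ ^ 2 := by
      rw [Complex.norm_real, Real.norm_eq_abs, sq_abs]
      exact hν_sq
    have hnorm₁ : ‖μ₁‖ ^ 2 = 3/8388608 := by
      rw [hμ₁, Complex.sq_norm, Complex.normSq_add_mul_I]
      rw [hs]; norm_num
    have hnorm₂ : ‖μ₂‖ ^ 2 = 3/8388608 := by
      have : μ₂ = ((-1/2048 : ℝ) : ℂ) + ((-s : ℝ) : ℂ) * Complex.I := by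
        rw [hμ₂]; push_cast; ring
      rw [this, Complex.sq_norm, Complex.normSq_add_mul_I]
      rw [neg_pow, hs]; norm_num
    have h₁ : ‖μ₁‖ < ‖((ν : ℝ) : ℂ)‖ := by
      apply lt_of_pow_lt_pow_left₀ 2 (norm_nonneg _)
      rw [hnorm₁]; exact hnormν
    have h₂ : ‖μ₂‖ < ‖((ν : ℝ) : ℂ)‖ := by
      apply lt_of_pow_lt_pow_left₀ 2 (norm_nonneg _)
      rw [hnorm₂]; exact hnormν
    calc (‖μ₁‖₊ : ℝ≥0∞) ⊔ (‖μ₂‖₊ : ℝ≥0∞) < (‖((ν : ℝ) : ℂ)‖₊ : ℝ≥0∞) := by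
          rw [sup_lt_iff]
          exact ⟨coe_lt_coe_norm h₁, coe_lt_coe_norm h₂⟩
      _ ≤ _ := hQν
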